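/- The number of parking functions π ∈ PF(m,n) with π_1 = 1 is (n-m+2)(n+1)^{m-2}, for m ≥ 2. -/

import Mathlib

open Finset

/-- running minimum of `H` on `[0, t]`. -/
def minSeq (H : ℕ → ℤ) : ℕ → ℤ
  | 0 => H 0
  | (t+1) => min (minSeq H t) (H (t+1))

lemma minSeq_le (H : ℕ → ℤ) {s t : ℕ} (h : s ≤ t) : minSeq H t ≤ H s := by
  induction t with
  | zero => simp_all [minSeq]
  | succ t ih =>
    rcases Nat.lt_or_ge s (t+1) with h' | h'
    · exact le_trans (min_le_left _ _) (ih (by omega))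
    · have : s = t + 1 := by omega
      subst this; exact min_le_right _ _

lemma minSeq_exists (H : ℕ → ℤ) (t : ℕ) : ∃ s ≤ t, minSeq H t = H s := by
  induction t with
  | zero => exact ⟨0, le_refl _, rfl⟩
  | succ t ih =>
    obtain ⟨s, hs, hse⟩ := ih
    rcases le_total (minSeq H t) (H (t+1)) with h | h
    · exact ⟨s, by omega, by rw [show minSeq H (t+1) = min (minSeq H t) (H (t+1)) from rfl, min_eq_left h, hse]⟩
    · exact ⟨t+1, le_refl _, by simp [minSeq, min_eq_right h]⟩

lemma minSeq_anti (H : ℕ → ℤ) {a b : ℕ} (h : a ≤ b) : minSeq H b ≤ minSeq H a := by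
  induction b with
  | zero => simp_all
  | succ b ih =>
    rcases Nat.lt_or_ge a (b+1) with h' | h'
    · exact le_trans (min_le_left _ _) (ih (by omega))
    · have : a = b + 1 := by omega
      subst this; rfl

lemma minSeq_step (H : ℕ → ℤ) (hstep : ∀ t, H t - 1 ≤ H (t+1)) (t : ℕ) :
    minSeq H t - 1 ≤ minSeq H (t+1) := by
  have h1 : minSeq H t ≤ H t := minSeq_le H (le_refl t)
  have : minSeq H (t+1) = min (minSeq H t) (H (t+1)) := rfl
  have := hstep t
  omega

lemma minSeq_rec_iff (H : ℕ → ℤ) (t : ℕ) :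
    minSeq H (t+1) < minSeq H t ↔ ∀ s ≤ t, H (t+1) < H s := by
  constructor
  · intro h s hs
    have h2 : minSeq H (t+1) = min (minSeq H t) (H (t+1)) := rfl
    have h3 : minSeq H (t+1) = H (t+1) := by omega
    have := minSeq_le H hs
    omega
  · intro h
    obtain ⟨s, hs, hse⟩ := minSeq_exists H t
    have h2 : minSeq H (t+1) = min (minSeq H t) (H (t+1)) := rfl
    have := h s hs
    omega

lemma minSeq_count (H : ℕ → ℤ) (hstep : ∀ t, H t - 1 ≤ H (t+1)) (a : ℕ) :
    ∀ b, a ≤ b →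
    (((Finset.Ico a b).filter (fun w => minSeq H (w+1) < minSeq H w)).card : ℤ)
      = minSeq H a - minSeq H b := by
  intro b hb
  induction b, hb using Nat.le_induction with
  | base => simp
  | succ b hb ih =>
    rw [Nat.Ico_succ_right_eq_insert_Ico hb, Finset.filter_insert]
    have hs := minSeq_step H hstep b
    have hmono : minSeq H b ≤ minSeq H a := minSeq_anti H hb
    have hle : minSeq H (b+1) ≤ minSeq H b := min_le_left _ _
    by_cases hc : minSeq H (b+1) < minSeq H b
    · rw [if_pos hc, Finset.card_insert_of_notMem (by simp)]
      push_cast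
      omega
    · rw [if_neg hc]
      have : minSeq H (b+1) = minSeq H b := by omega
      rw [ih, this]
open Finset

/-- partial sums of `A (s % N) - 1`. -/
def Hseq (N : ℕ) (A : ℕ → ℕ) (t : ℕ) : ℤ :=
  ∑ s ∈ Finset.range t, ((A (s % N) : ℤ) - 1)

lemma Hseq_succ (N : ℕ) (A : ℕ → ℕ) (t : ℕ) :
    Hseq N A (t+1) = Hseq N A t + ((A (t % N) : ℤ) - 1) := by
  simp [Hseq, Finset.sum_range_succ]
  ring

lemma Hseq_step (N : ℕ) (A : ℕ → ℕ) (t : ℕ) : Hseq N A t - 1 ≤ Hseq N A (t+1) := by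
  rw [Hseq_succ]
  have : (0 : ℤ) ≤ (A (t % N) : ℤ) := Int.natCast_nonneg _
  omega

lemma Hseq_Ico (N : ℕ) (A : ℕ → ℕ) {a b : ℕ} (h : a ≤ b) :
    ∑ s ∈ Finset.Ico a b, ((A (s % N) : ℤ) - 1) = Hseq N A b - Hseq N A a := by
  rw [Hseq, Hseq, ← Finset.sum_Ico_eq_sub _ h]

lemma Hseq_periodic (N m : ℕ) (A : ℕ → ℕ) (hA : ∑ s ∈ Finset.range N, A s = m) (t : ℕ) :
    Hseq N A (t + N) = Hseq N A t + ((m : ℤ) - N) := by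
  induction t with
  | zero =>
    simp only [Nat.zero_add, Hseq]
    rw [Finset.range_zero, Finset.sum_empty]
    have : ∑ s ∈ Finset.range N, ((A (s % N) : ℤ) - 1)
        = ∑ s ∈ Finset.range N, ((A s : ℤ) - 1) := by
      apply Finset.sum_congr rfl
      intro s hs
      rw [Nat.mod_eq_of_lt (Finset.mem_range.mp hs)]
    rw [this, Finset.sum_sub_distrib]
    simp [← Nat.cast_sum, hA]
  | succ t ih =>
    have : t + 1 + N = (t + N) + 1 := by omega
    rw [this, Hseq_succ, ih, Hseq_succ, Nat.add_mod_right]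
    ring

def pk (m n : ℕ) (g : Fin m → ZMod (n+1)) : Prop :=
  ∀ t ≤ n, (Finset.univ.filter (fun k => t ≤ (g k).val)).card + t ≤ n

instance (m n : ℕ) (g : Fin m → ZMod (n+1)) : Decidable (pk m n g) := by
  unfold pk; infer_instance

lemma card_ge_eq (m n : ℕ) (f : Fin m → ZMod (n+1)) (c : ZMod (n+1)) (t : ℕ) (ht : t ≤ n) :
    ((Finset.univ.filter (fun k => t ≤ (f k + c).val)).card : ℤ)
      = Hseq (n+1) (fun s => (Finset.univ.filter (fun k => (f k).val = s)).card) ((-c).val + (n+1))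
        - Hseq (n+1) (fun s => (Finset.univ.filter (fun k => (f k).val = s)).card) ((-c).val + t)
        + ((n : ℤ) + 1 - t) := by
  set A : ℕ → ℕ := fun s => (Finset.univ.filter (fun k => (f k).val = s)).card with hAdef
  set v := (-c).val with hvdef
  have hv : v < n + 1 := ZMod.val_lt _
  -- step a : fiberwise count
  have stepa : (Finset.univ.filter (fun k => t ≤ (f k + c).val)).card
      = ∑ s ∈ Finset.Ico t (n+1), (Finset.univ.filter (fun k => (f k + c).val = s)).card := by
    rw [Finset.card_eq_sum_card_fiberwise
      (f := fun k => (f k + c).val) (t := Finset.Ico t (n+1))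
      (fun k hk => by
        simp only [Finset.mem_coe, Finset.mem_filter, Finset.mem_univ, true_and] at hk
        exact Finset.mem_Ico.mpr ⟨hk, ZMod.val_lt _⟩)]
    apply Finset.sum_congr rfl
    intro s hs
    rw [Finset.mem_Ico] at hs
    congr 1
    rw [Finset.filter_filter]
    apply Finset.filter_congr
    intro k _
    omega
  -- step b : each fiber is a shifted fiber of f
  have stepb : ∀ s ∈ Finset.Ico t (n+1),
      (Finset.univ.filter (fun k => (f k + c).val = s)).card = A ((s + v) % (n+1)) := by
    intro s hs
    rw [Finset.mem_Ico] at hs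
    congr 1
    apply Finset.filter_congr
    intro k _
    have hcast : ((s + v : ℕ) : ZMod (n+1)) = (s : ZMod (n+1)) - c := by
      push_cast
      rw [hvdef, ZMod.natCast_rightInverse]
      ring
    constructor
    · intro h
      have h1 : f k + c = (s : ZMod (n+1)) := by
        rw [← ZMod.natCast_rightInverse (f k + c), h]
      have h2 : f k = ((s + v : ℕ) : ZMod (n+1)) := by
        rw [hcast]; rw [eq_sub_iff_add_eq]; exact h1
      simp only [h2, ZMod.val_natCast]
    · intro h
      have h1 : f k = ((s + v : ℕ) : ZMod (n+1)) := by
        rw [← ZMod.natCast_rightInverse (f k), h]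
        exact ZMod.natCast_mod _ _
      have h2 : f k + c = (s : ZMod (n+1)) := by
        rw [h1, hcast]; ring
      rw [h2, ZMod.val_cast_of_lt hs.2]
  -- step c : reindex
  have stepc : ∑ s ∈ Finset.Ico t (n+1), A ((s + v) % (n+1))
      = ∑ u ∈ Finset.Ico (v + t) (v + (n+1)), A (u % (n+1)) := by
    rw [Finset.sum_Ico_eq_sum_range, Finset.sum_Ico_eq_sum_range]
    rw [show v + (n+1) - (v + t) = n + 1 - t by omega]
    apply Finset.sum_congr rfl
    intro j _
    have : t + j + v = v + t + j := by omega
    rw [this]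
  -- step d : express as Hseq difference
  have hab : v + t ≤ v + (n+1) := by omega
  have stepd := Hseq_Ico (n+1) A hab
  simp only [Finset.sum_sub_distrib, Finset.sum_const, Nat.card_Ico, nsmul_eq_mul,
    mul_one] at stepd
  rw [stepa, Finset.sum_congr rfl stepb, stepc]
  push_cast
  omega

lemma key (m n : ℕ) (hmn : m ≤ n) (g : Fin m → ZMod (n+1)) :
    (Finset.univ.filter (fun c : ZMod (n+1) => pk m n (fun k => g k + c))).card
      = n + 1 - m := by
  set A : ℕ → ℕ := fun s => (Finset.univ.filter (fun k => (g k).val = s)).card with hAdef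
  have hA : ∑ s ∈ Finset.range (n+1), A s = m := by
    have h := Finset.card_eq_sum_card_fiberwise
      (f := fun k => (g k).val) (s := (Finset.univ : Finset (Fin m)))
      (t := Finset.range (n+1))
      (fun k _ => Finset.mem_range.mpr (ZMod.val_lt _))
    simp only [Finset.card_univ, Fintype.card_fin] at h
    exact h.symm
  set H := Hseq (n+1) A with hHdef
  have hstep : ∀ t, H t - 1 ≤ H (t+1) := fun t => Hseq_step (n+1) A t
  have hper : ∀ t, H (t + (n+1)) = H t + ((m:ℤ) - (n+1)) := Hseq_periodic (n+1) m A hA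
  have hmz : (m : ℤ) ≤ (n : ℤ) + 1 := by omega
  have hiff : ∀ c : ZMod (n+1), pk m n (fun k => g k + c) ↔
      minSeq H ((-c).val + n + 1) < minSeq H ((-c).val + n) := by
    intro c
    set v := (-c).val with hv
    have hv1 : v < n + 1 := ZMod.val_lt _
    have h1 : pk m n (fun k => g k + c) ↔ ∀ t ≤ n, H (v + (n+1)) < H (v + t) := by
      show (∀ t ≤ n, (Finset.univ.filter (fun k => t ≤ (g k + c).val)).card + t ≤ n) ↔ _
      apply forall_congr'
      intro t
      constructor
      · intro h ht
        have hcard := card_ge_eq m n g c t ht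
        rw [← hAdef, ← hHdef, ← hv] at hcard
        have h2 := h ht
        omega
      · intro h ht
        have hcard := card_ge_eq m n g c t ht
        rw [← hAdef, ← hHdef, ← hv] at hcard
        have h2 := h ht
        omega
    rw [h1]
    have h2 : (∀ t ≤ n, H (v + (n+1)) < H (v + t)) ↔ ∀ s ≤ v + n, H (v + n + 1) < H s := by
      constructor
      · intro h s hs
        rcases le_or_gt v s with h' | h'
        · have h3 := h (s - v) (by omega)
          rw [show v + (s - v) = s by omega] at h3
          rw [show v + (n+1) = v + n + 1 by omega] at h3
          exact h3
        · have h3 := h (s + n + 1 - v) (by omega)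
          rw [show v + (s + n + 1 - v) = s + (n+1) by omega, hper s] at h3
          rw [show v + (n+1) = v + n + 1 by omega] at h3
          omega
      · intro h t ht
        have h3 := h (v + t) (by omega)
        rw [show v + n + 1 = v + (n+1) by omega] at h3
        exact h3
    rw [h2]
    exact (minSeq_rec_iff H (v + n)).symm
  have hbij : (Finset.univ.filter (fun c : ZMod (n+1) => pk m n (fun k => g k + c))).card
      = ((Finset.Ico n (n + (n+1))).filter (fun w => minSeq H (w+1) < minSeq H w)).card := by
    apply Finset.card_bij (fun c _ => (-c).val + n)
    · intro c hc
      rw [Finset.mem_filter] at hc ⊢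
      refine ⟨Finset.mem_Ico.mpr ⟨by omega, by have := ZMod.val_lt (-c); omega⟩, ?_⟩
      exact (hiff c).mp hc.2
    · intro c₁ h₁ c₂ h₂ h
      have hval : (-c₁).val = (-c₂).val := by omega
      have e1 : ((-c₁).val : ZMod (n+1)) = -c₁ := ZMod.natCast_rightInverse _
      have e2 : ((-c₂).val : ZMod (n+1)) = -c₂ := ZMod.natCast_rightInverse _
      have : -c₁ = -c₂ := by rw [← e1, ← e2, hval]
      exact neg_injective this
    · intro w hw
      rw [Finset.mem_filter, Finset.mem_Ico] at hw
      have hvv : (-(-((w - n : ℕ) : ZMod (n+1)))).val = w - n := by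
        rw [neg_neg, ZMod.val_cast_of_lt (by omega)]
      refine ⟨-((w - n : ℕ) : ZMod (n+1)), Finset.mem_filter.mpr ⟨Finset.mem_univ _, ?_⟩, ?_⟩
      · rw [hiff, hvv, show w - n + n = w by omega]
        exact hw.2
      · rw [hvv]; omega
  rw [hbij]
  have hcount := minSeq_count H hstep n (n + (n+1)) (by omega)
  have hshift : minSeq H (n + (n+1)) = minSeq H n + ((m:ℤ) - (n+1)) := by
    apply le_antisymm
    · obtain ⟨s₀, hs₀, he₀⟩ := minSeq_exists H n
      have h1 := minSeq_le H (show s₀ + (n+1) ≤ n + (n+1) by omega)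
      rw [hper s₀] at h1
      omega
    · obtain ⟨s₁, hs₁, he₁⟩ := minSeq_exists H (n + (n+1))
      rcases le_or_gt s₁ n with h' | h'
      · have h2 := minSeq_le H h'
        omega
      · have h2 := minSeq_le H (show s₁ - (n+1) ≤ n by omega)
        have h3 := hper (s₁ - (n+1))
        rw [show s₁ - (n+1) + (n+1) = s₁ by omega] at h3
        omega
  omega

lemma count_pk (m n : ℕ) (hm : 1 ≤ m) (hmn : m ≤ n) :
    ((Finset.univ : Finset (Fin m → ZMod (n+1))).filter (pk m n)).card
      = (n + 1 - m) * (n + 1) ^ (m - 1) := by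
  have hswap : ∑ f : Fin m → ZMod (n+1),
        (Finset.univ.filter (fun c : ZMod (n+1) => pk m n (fun k => f k + c))).card
      = ∑ c : ZMod (n+1),
        (Finset.univ.filter (fun f : Fin m → ZMod (n+1) => pk m n (fun k => f k + c))).card := by
    simp only [Finset.card_filter]
    exact Finset.sum_comm
  have hL : ∑ f : Fin m → ZMod (n+1),
        (Finset.univ.filter (fun c : ZMod (n+1) => pk m n (fun k => f k + c))).card
      = (n+1)^m * (n + 1 - m) := by
    rw [Finset.sum_congr rfl (fun f _ => key m n hmn f), Finset.sum_const, smul_eq_mul,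
      Finset.card_univ]
    congr 1
    simp [Fintype.card_fun, ZMod.card]
  have hinner : ∀ c : ZMod (n+1),
      (Finset.univ.filter (fun f : Fin m → ZMod (n+1) => pk m n (fun k => f k + c))).card
        = (Finset.univ.filter (pk m n)).card := by
    intro c
    apply Finset.card_bij (fun f _ => fun k => f k + c)
    · intro f hf
      rw [Finset.mem_filter] at hf ⊢
      exact ⟨Finset.mem_univ _, hf.2⟩
    · intro f₁ _ f₂ _ h
      funext k
      have := congrFun h k
      simpa using this
    · intro q hq
      rw [Finset.mem_filter] at hq
      have he : (fun k => q k - c + c) = q := by funext k; ring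
      refine ⟨fun k => q k - c, Finset.mem_filter.mpr ⟨Finset.mem_univ _, ?_⟩, ?_⟩
      · rw [he]; exact hq.2
      · exact he
  have hR : ∑ c : ZMod (n+1),
        (Finset.univ.filter (fun f : Fin m → ZMod (n+1) => pk m n (fun k => f k + c))).card
      = (n+1) * (Finset.univ.filter (pk m n)).card := by
    rw [Finset.sum_congr rfl (fun c _ => hinner c), Finset.sum_const, smul_eq_mul,
      Finset.card_univ, ZMod.card]
  have hpow : (n+1)^m = (n+1) * (n+1)^(m-1) := by
    rw [mul_comm, ← pow_succ, Nat.sub_add_cancel hm]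
  have key2 : (n+1) * ((Finset.univ.filter (pk m n)).card)
      = (n+1) * ((n + 1 - m) * (n+1)^(m-1)) := by
    rw [← hR, ← hswap, hL, hpow]
    ring
  exact Nat.eq_of_mul_eq_mul_left n.succ_pos key2

/-- `π : [m] → [n]` is a parking function in `PF(m,n)`. -/
def IsPF (m n : ℕ) (π : Fin m → ℕ) : Prop :=
  (∀ k, 1 ≤ π k ∧ π k ≤ n) ∧
  ∀ i, i ≤ n → m + i ≤ (Finset.univ.filter (fun k => π k ≤ i)).card + n

lemma card_filter_fin_succ {m : ℕ} (p : Fin (m+1) → Prop) [DecidablePred p] :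
    (Finset.univ.filter p).card
      = (if p 0 then 1 else 0) + (Finset.univ.filter (fun j : Fin m => p j.succ)).card := by
  rw [Finset.card_filter, Fin.sum_univ_succ, Finset.card_filter]

lemma isPF_iff_pk (m n : ℕ) (hmn : m ≤ n) (g : Fin m → ZMod (n+1)) :
    IsPF m n (fun k => (g k).val + 1) ↔ pk m n g := by
  show ((∀ k, 1 ≤ (g k).val + 1 ∧ (g k).val + 1 ≤ n) ∧
      ∀ i, i ≤ n → m + i ≤ (Finset.univ.filter (fun k => (g k).val + 1 ≤ i)).card + n)
    ↔ pk m n g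
  constructor
  · rintro ⟨hb, hc⟩ t ht
    by_cases h0 : t = 0
    · subst h0
      have hle : (Finset.univ.filter (fun k => 0 ≤ (g k).val)).card ≤ m := by
        have := Finset.card_filter_le (Finset.univ : Finset (Fin m))
          (fun k => 0 ≤ (g k).val)
        simpa using this
      omega
    · have hcc := hc t ht
      have he : Finset.univ.filter (fun k => t ≤ (g k).val)
          = Finset.univ.filter (fun k => ¬ ((g k).val + 1 ≤ t)) :=
        Finset.filter_congr (fun k _ => by omega)
      have hcompl := Finset.card_filter_add_card_filter_not
        (s := (Finset.univ : Finset (Fin m))) (p := fun k => (g k).val + 1 ≤ t)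
      rw [Finset.card_univ, Fintype.card_fin] at hcompl
      rw [he]
      omega
  · intro h
    refine ⟨?_, ?_⟩
    · intro k
      refine ⟨by omega, ?_⟩
      have h2 := h n le_rfl
      have h3 : (Finset.univ.filter (fun k => n ≤ (g k).val)).card = 0 := by omega
      rw [Finset.card_eq_zero] at h3
      have h4 : ¬ (n ≤ (g k).val) := by
        intro hcon
        have hk : k ∈ Finset.univ.filter (fun k => n ≤ (g k).val) :=
          Finset.mem_filter.mpr ⟨Finset.mem_univ _, hcon⟩
        rw [h3] at hk
        exact absurd hk (Finset.notMem_empty _)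
      omega
    · intro i hi
      by_cases h0 : i = 0
      · subst h0
        omega
      · have h2 := h i hi
        have he : Finset.univ.filter (fun k => (g k).val + 1 ≤ i)
            = Finset.univ.filter (fun k => ¬ (i ≤ (g k).val)) :=
          Finset.filter_congr (fun k _ => by omega)
        have hcompl := Finset.card_filter_add_card_filter_not
          (s := (Finset.univ : Finset (Fin m))) (p := fun k => i ≤ (g k).val)
        rw [Finset.card_univ, Fintype.card_fin] at hcompl
        rw [he]
        omega

lemma ncard_PF (m n : ℕ) (hm : 1 ≤ m) (hmn : m ≤ n) :
    {π : Fin m → ℕ | IsPF m n π}.ncard = (n + 1 - m) * (n + 1) ^ (m - 1) := by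
  have hinj : Function.Injective (fun (g : Fin m → ZMod (n+1)) (k : Fin m) => (g k).val + 1) := by
    intro g₁ g₂ h
    funext k
    have h1 := congrFun h k
    simp only [] at h1
    have hval : (g₁ k).val = (g₂ k).val := by omega
    calc g₁ k = ((g₁ k).val : ZMod (n+1)) := (ZMod.natCast_rightInverse _).symm
    _ = ((g₂ k).val : ZMod (n+1)) := by rw [hval]
    _ = g₂ k := ZMod.natCast_rightInverse _
  have himg : (fun (g : Fin m → ZMod (n+1)) (k : Fin m) => (g k).val + 1) '' {g | pk m n g}
      = {π | IsPF m n π} := by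
    ext π
    constructor
    · rintro ⟨g, hg, rfl⟩
      exact (isPF_iff_pk m n hmn g).mpr hg
    · intro hπ
      have hb := hπ.1
      refine ⟨fun k => ((π k - 1 : ℕ) : ZMod (n+1)), ?_, ?_⟩
      · apply (isPF_iff_pk m n hmn _).mp
        have hEg : (fun k => (((π k - 1 : ℕ) : ZMod (n+1)).val + 1)) = π := by
          funext k
          rw [ZMod.val_cast_of_lt (show π k - 1 < n + 1 by have := hb k; omega)]
          have := hb k
          omega
        rw [hEg]
        exact hπ
      · funext k
        simp only []
        rw [ZMod.val_cast_of_lt (show π k - 1 < n + 1 by have := hb k; omega)]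
        have := hb k
        omega
  rw [← himg, Set.ncard_image_of_injective _ hinj]
  have hcoe : {g | pk m n g} = ↑(Finset.univ.filter (pk m n)) := by
    ext g
    simp
  rw [hcoe, Set.ncard_coe_finset]
  exact count_pk m n hm hmn

lemma tail_iff (m' n : ℕ) (hmn : m' + 2 ≤ n) (π : Fin (m'+2) → ℕ) (h1 : π 0 = 1) :
    IsPF (m'+2) n π ↔ IsPF (m'+1) n (Fin.tail π) := by
  unfold IsPF
  have htf : ∀ i : ℕ, (Finset.univ.filter (fun j : Fin (m'+1) => Fin.tail π j ≤ i))
      = Finset.univ.filter (fun j : Fin (m'+1) => π j.succ ≤ i) := fun i => rfl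
  constructor
  · rintro ⟨hb, hc⟩
    refine ⟨fun j => hb j.succ, ?_⟩
    intro i hi
    rw [htf]
    by_cases h0 : i = 0
    · subst h0
      omega
    · have h2 := hc i hi
      have hsplit := card_filter_fin_succ (fun k : Fin (m'+2) => π k ≤ i)
      rw [if_pos (show π 0 ≤ i by omega)] at hsplit
      omega
  · rintro ⟨hb, hc⟩
    refine ⟨?_, ?_⟩
    · intro k
      refine Fin.cases ?_ ?_ k
      · rw [h1]
        exact ⟨le_rfl, by omega⟩
      · intro j
        exact hb j
    · intro i hi
      by_cases h0 : i = 0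
      · subst h0
        omega
      · have h2 := hc i hi
        rw [htf] at h2
        have hsplit := card_filter_fin_succ (fun k : Fin (m'+2) => π k ≤ i)
        rw [if_pos (show π 0 ≤ i by omega)] at hsplit
        omega

theorem card_PF_first_eq_one (m n : ℕ) (hm : 2 ≤ m) (hmn : m ≤ n) :
    {π : Fin m → ℕ | IsPF m n π ∧ π ⟨0, by omega⟩ = 1}.ncard =
      (n - m + 2) * (n + 1) ^ (m - 2) := by
  obtain ⟨m', rfl⟩ : ∃ m', m = m' + 2 := ⟨m - 2, by omega⟩
  have h00 : (⟨0, by omega⟩ : Fin (m' + 2)) = 0 := by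
    apply Fin.ext
    simp
  simp only [h00]
  have hinj : Set.InjOn (fun π : Fin (m'+2) → ℕ => Fin.tail π)
      {π | IsPF (m'+2) n π ∧ π 0 = 1} := by
    intro π₁ hπ₁ π₂ hπ₂ h
    funext k
    refine Fin.cases ?_ ?_ k
    · rw [hπ₁.2, hπ₂.2]
    · intro j
      exact congrFun h j
  have himg : (fun π : Fin (m'+2) → ℕ => Fin.tail π) '' {π | IsPF (m'+2) n π ∧ π 0 = 1}
      = {σ : Fin (m'+1) → ℕ | IsPF (m'+1) n σ} := by
    ext σ
    constructor
    · rintro ⟨π, ⟨hp, h1⟩, rfl⟩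
      exact (tail_iff m' n hmn π h1).mp hp
    · intro hσ
      refine ⟨Fin.cons 1 σ, ⟨?_, Fin.cons_zero _ _⟩, Fin.tail_cons _ _⟩
      rw [tail_iff m' n hmn _ (Fin.cons_zero _ _), Fin.tail_cons]
      exact hσ
  have hstep : {π : Fin (m'+2) → ℕ | IsPF (m'+2) n π ∧ π 0 = 1}.ncard
      = {σ : Fin (m'+1) → ℕ | IsPF (m'+1) n σ}.ncard := by
    rw [← himg, Set.ncard_image_of_injOn hinj]
  rw [hstep]
  clear hinj himg hstep
  rw [ncard_PF (m'+1) n (Nat.succ_le_succ (Nat.zero_le m')) (Nat.le_of_succ_le hmn)]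
  simp only [Nat.add_sub_cancel]
  congr 1
  omega
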